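/- Suppose in addition that σ is continuous and not identically zero, that m ∈ (d+2−4n, d], that s is an integer with s > max{d/4 + 2n − 1, d}, and that N := (∫_{ℝ^d} (1+|γ|²)^s |σ̂(γ)|² dγ)^{1/2} < ∞. Then there exists a constant C > 0, depending only on d, n, m, s, and C₁ (in particular independent of k and of σ), such that for every k > max{ 2C₁/‖σ‖_{L¹(B₁)}, 1 }, one has ‖σ‖_{L^∞(B₁)} ≤ C k^{d/s + m + 4n − d − 1} (1 + N) M_PL(k). (Lipschitz-type stability for the polyharmonic inverse random source problem.) -/

import Mathlib

open MeasureTheory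

noncomputable section

/-- `ℝ^d` with the Euclidean structure. -/
abbrev Ed (d : ℕ) := EuclideanSpace ℝ (Fin d)

/-- `β_d = e^{iπ/4}/√(8π)` for `d = 2` and `β_d = 1/(4π)` otherwise (`d = 3`). -/
def betaD (d : ℕ) : ℂ :=
  if d = 2 then Complex.exp (Complex.I * Real.pi / 4) / (Real.sqrt (8 * Real.pi) : ℝ)
  else 1 / (4 * (Real.pi : ℂ))

/-- Fourier transform `σ̂(γ) = ∫_{ℝ^d} σ(z) e^{-iγ·z} dz` of a real-valued function. -/
def sigmaHat (d : ℕ) (σ : Ed d → ℝ) (γ : Ed d) : ℂ :=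
  ∫ z, (σ z : ℂ) * Complex.exp (-Complex.I * ((inner ℝ γ z : ℝ) : ℂ))

/-- Correlation of far-field patterns of the stochastic polyharmonic wave equation:
`F_PL(x̂,ŷ,k) = (β_d²/n²) k^{d+1−4n} (k^{−m} σ̂(k(x̂+ŷ)) + ∫_{B₁} r(z,−kŷ) e^{−ik(x̂+ŷ)·z} dz)`. -/
def FPL (d n : ℕ) (m : ℝ) (σ : Ed d → ℝ) (r : Ed d → Ed d → ℂ) (k : ℝ)
    (x y : Ed d) : ℂ :=
  (betaD d) ^ 2 / (n : ℂ) ^ 2 * ((k ^ ((d : ℝ) + 1 - 4 * (n : ℝ)) : ℝ) : ℂ) *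
    (((k ^ (-m) : ℝ) : ℂ) * sigmaHat d σ (k • (x + y)) +
      ∫ z in Metric.ball (0 : Ed d) 1,
        r z (-(k • y)) * Complex.exp (-Complex.I * ((inner ℝ (k • (x + y)) z : ℝ) : ℂ)))

/-- `M_PL(k) = sup_{x̂,ŷ ∈ S^{d−1}} |F_PL(x̂,ŷ,k)|`. -/
def MPL (d n : ℕ) (m : ℝ) (σ : Ed d → ℝ) (r : Ed d → Ed d → ℂ) (k : ℝ) : ℝ :=
  sSup {v : ℝ | ∃ x y : Ed d, ‖x‖ = 1 ∧ ‖y‖ = 1 ∧ v = ‖FPL d n m σ r k x y‖}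

end

set_option maxHeartbeats 1000000

section AuxLemmas
open MeasureTheory Metric FourierTransform Real
noncomputable section

lemma betaD_ne_zero (d : ℕ) : betaD d ≠ 0 := by
  unfold betaD
  split_ifs
  · apply div_ne_zero (Complex.exp_ne_zero _)
    simp only [ne_eq, Complex.ofReal_eq_zero]
    positivity
  · apply div_ne_zero one_ne_zero
    simp only [ne_eq, mul_eq_zero, OfNat.ofNat_ne_zero, false_or, Complex.ofReal_eq_zero]
    exact fun h => Real.pi_ne_zero (by exact_mod_cast h)

lemma Ed.exists_unit {d : ℕ} (hd : 2 ≤ d) : ∃ e : Ed d, ‖e‖ = 1 := by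
  refine ⟨EuclideanSpace.single ⟨0, by omega⟩ (1:ℝ), ?_⟩
  rw [EuclideanSpace.norm_single]; norm_num

lemma exists_unit_pair {d : ℕ} (hd : 2 ≤ d) {k : ℝ} (hk : 0 < k) (γ : Ed d) (hγ : ‖γ‖ ≤ 2*k) :
    ∃ x y : Ed d, ‖x‖ = 1 ∧ ‖y‖ = 1 ∧ k • (x + y) = γ := by
  set g : Ed d := k⁻¹ • γ with hg
  have hgn : ‖g‖ ≤ 2 := by
    rw [hg, norm_smul, norm_inv, Real.norm_of_nonneg hk.le]
    rw [inv_mul_le_iff₀ hk]; linarith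
  obtain ⟨v, hv1, hvg⟩ : ∃ v : Ed d, ‖v‖ = 1 ∧ (inner ℝ g v : ℝ) = 0 := by
    by_cases hg0 : g = 0
    · obtain ⟨e, he⟩ := Ed.exists_unit hd
      exact ⟨e, he, by simp [hg0]⟩
    · have hKbot : ((ℝ ∙ g)ᗮ : Submodule ℝ (Ed d)) ≠ ⊥ := by
        intro hbot
        have htop : (ℝ ∙ g) = ⊤ := Submodule.orthogonal_eq_bot_iff.mp hbot
        have h1 : Module.finrank ℝ (Ed d) = 1 := by
          have := finrank_span_singleton (K := ℝ) hg0
          rw [htop] at this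
          rw [← this, finrank_top]
        rw [finrank_euclideanSpace_fin] at h1; omega
      obtain ⟨v₀, hv₀K, hv₀⟩ := Submodule.exists_mem_ne_zero_of_ne_bot hKbot
      refine ⟨(‖v₀‖⁻¹ : ℝ) • v₀, norm_smul_inv_norm hv₀, ?_⟩
      rw [real_inner_smul_right]
      have := (Submodule.mem_orthogonal _ _).mp hv₀K g (Submodule.mem_span_singleton_self g)
      rw [this, mul_zero]
  set t : ℝ := Real.sqrt (1 - ‖g‖^2/4) with ht
  have ht2 : t^2 = 1 - ‖g‖^2/4 := Real.sq_sqrt (by nlinarith [norm_nonneg g])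
  have ht0 : 0 ≤ t := Real.sqrt_nonneg _
  refine ⟨(2:ℝ)⁻¹ • g + t • v, (2:ℝ)⁻¹ • g - t • v, ?_, ?_, ?_⟩
  · have h := norm_add_sq_real ((2:ℝ)⁻¹ • g) (t • v)
    have hi : (inner ℝ ((2:ℝ)⁻¹ • g) (t • v) : ℝ) = 0 := by
      rw [real_inner_smul_left, real_inner_smul_right, hvg]; ring
    have h2 : ‖(2:ℝ)⁻¹ • g‖^2 = ‖g‖^2/4 := by
      rw [norm_smul]; simp [mul_pow]; ring
    have h3 : ‖t • v‖^2 = t^2 := by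
      rw [norm_smul, hv1, mul_one, Real.norm_of_nonneg ht0]
    rw [hi, h2, h3, ht2] at h
    nlinarith [norm_nonneg ((2:ℝ)⁻¹ • g + t • v)]
  · have h := norm_sub_sq_real ((2:ℝ)⁻¹ • g) (t • v)
    have hi : (inner ℝ ((2:ℝ)⁻¹ • g) (t • v) : ℝ) = 0 := by
      rw [real_inner_smul_left, real_inner_smul_right, hvg]; ring
    have h2 : ‖(2:ℝ)⁻¹ • g‖^2 = ‖g‖^2/4 := by
      rw [norm_smul]; simp [mul_pow]; ring
    have h3 : ‖t • v‖^2 = t^2 := by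
      rw [norm_smul, hv1, mul_one, Real.norm_of_nonneg ht0]
    rw [hi, h2, h3, ht2] at h
    nlinarith [norm_nonneg ((2:ℝ)⁻¹ • g - t • v)]
  · have : (2:ℝ)⁻¹ • g + t • v + ((2:ℝ)⁻¹ • g - t • v) = g := by module
    rw [this, hg, smul_smul, mul_inv_cancel₀ hk.ne', one_smul]
end
noncomputable section

lemma phase_abs (c : ℝ) : ‖Complex.exp (-Complex.I * (c : ℂ))‖ = 1 := by
  rw [Complex.norm_exp]
  simp

lemma sigmaHat_abs_le {d : ℕ} {σ : Ed d → ℝ} (hσ0 : ∀ z, 0 ≤ σ z) (γ : Ed d) :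
    ‖sigmaHat d σ γ‖ ≤ ∫ z, σ z := by
  refine le_trans (norm_integral_le_integral_norm _) (le_of_eq ?_)
  congr 1
  ext z
  rw [norm_mul, phase_abs, mul_one,
    Complex.norm_real, Real.norm_of_nonneg (hσ0 z)]

lemma sigmaHat_zero {d : ℕ} (σ : Ed d → ℝ) : sigmaHat d σ 0 = ((∫ z, σ z : ℝ) : ℂ) := by
  unfold sigmaHat
  have : ∀ z : Ed d, (σ z : ℂ) * Complex.exp (-Complex.I * ((inner ℝ (0 : Ed d) z : ℝ) : ℂ)) = ((σ z : ℝ) : ℂ) := by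
    intro z; simp
  simp_rw [this]
  exact integral_ofReal
end
noncomputable section

lemma phase_abs' (c : ℝ) : ‖Complex.exp (-Complex.I * (c : ℂ))‖ = 1 := by
  rw [Complex.norm_exp]; simp

lemma rTerm_bound {d : ℕ} {m C₁ : ℝ} {r : Ed d → Ed d → ℂ} {k : ℝ}
    (hr : ∀ ξ : Ed d, 1 < ‖ξ‖ →
      (∫ z in Metric.ball (0 : Ed d) 1, ‖r z ξ‖) ≤ C₁ * ‖ξ‖ ^ (-(m + 1)))
    (hk : 1 < k) (y : Ed d) (hy : ‖y‖ = 1) (γ : Ed d) :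
    ‖∫ z in Metric.ball (0 : Ed d) 1,
        r z (-(k • y)) * Complex.exp (-Complex.I * ((inner ℝ γ z : ℝ) : ℂ))‖
      ≤ C₁ * k ^ (-(m + 1)) := by
  have hξ : ‖-(k • y)‖ = k := by
    rw [norm_neg, norm_smul, hy, mul_one, Real.norm_of_nonneg (by linarith)]
  calc ‖∫ z in Metric.ball (0 : Ed d) 1,
        r z (-(k • y)) * Complex.exp (-Complex.I * ((inner ℝ γ z : ℝ) : ℂ))‖
      ≤ ∫ z in Metric.ball (0 : Ed d) 1,
          ‖r z (-(k • y)) * Complex.exp (-Complex.I * ((inner ℝ γ z : ℝ) : ℂ))‖ := by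
        exact norm_integral_le_integral_norm _
    _ = ∫ z in Metric.ball (0 : Ed d) 1, ‖r z (-(k • y))‖ := by
        congr 1; ext z
        rw [norm_mul, phase_abs', mul_one]
    _ ≤ C₁ * ‖-(k • y)‖ ^ (-(m + 1)) := hr _ (by rw [hξ]; exact hk)
    _ = C₁ * k ^ (-(m + 1)) := by rw [hξ]

lemma FPL_abs_eq {d n : ℕ} {m : ℝ} {σ : Ed d → ℝ} {r : Ed d → Ed d → ℂ} {k : ℝ}
    (hk : 0 < k) (x y : Ed d) :
    ‖FPL d n m σ r k x y‖ =
      ‖(betaD d) ^ 2 / (n : ℂ) ^ 2‖ * k ^ ((d : ℝ) + 1 - 4 * (n : ℝ)) *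
      ‖((k ^ (-m) : ℝ) : ℂ) * sigmaHat d σ (k • (x + y)) +
        ∫ z in Metric.ball (0 : Ed d) 1,
          r z (-(k • y)) * Complex.exp (-Complex.I * ((inner ℝ (k • (x + y)) z : ℝ) : ℂ))‖ := by
  unfold FPL
  rw [norm_mul, norm_mul, Complex.norm_real, Real.norm_eq_abs,
    abs_of_pos (Real.rpow_pos_of_pos hk _)]
end
noncomputable section

variable {d s : ℕ} {σ : Ed d → ℝ}

lemma fourier_eq_sigmaHat (σ : Ed d → ℝ) (w : Ed d) :
    𝓕 (fun z : Ed d => (σ z : ℂ)) w = sigmaHat d σ ((2 * Real.pi) • w) := by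
  rw [Real.fourier_eq']
  unfold sigmaHat
  congr 1; ext z
  rw [smul_eq_mul, mul_comm]
  congr 1
  have : (inner ℝ ((2 * Real.pi) • w) z : ℝ) = 2 * Real.pi * (inner ℝ z w : ℝ) := by
    rw [real_inner_smul_left, real_inner_comm]
  rw [this]
  push_cast
  ring

lemma sigmaHat_continuous (hσ : Integrable σ) : Continuous (sigmaHat d σ) := by
  have h1 : Continuous (𝓕 (fun z : Ed d => (σ z : ℂ))) :=
    VectorFourier.fourierIntegral_continuous Real.continuous_fourierChar (innerSL ℝ).continuous₂
      (hσ.ofReal)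
  have h2 : Continuous fun γ : Ed d => 𝓕 (fun z : Ed d => (σ z : ℂ)) ((2 * Real.pi)⁻¹ • γ) :=
    h1.comp (continuous_const_smul _)
  have h3 : ∀ γ : Ed d, 𝓕 (fun z : Ed d => (σ z : ℂ)) ((2 * Real.pi)⁻¹ • γ) = sigmaHat d σ γ := by
    intro γ
    rw [fourier_eq_sigmaHat, smul_smul, mul_inv_cancel₀ (by positivity), one_smul]
  simpa only [h3] using h2
end
noncomputable section
variable {d s : ℕ} {σ : Ed d → ℝ}

lemma one_add_sq_pos (γ : Ed d) : (0:ℝ) < 1 + ‖γ‖ ^ 2 := by positivity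

lemma u_memL2 (hσ : Integrable σ)
    (hH : Integrable (fun γ : Ed d =>
      (1 + ‖γ‖ ^ 2) ^ (s : ℝ) * (‖sigmaHat d σ γ‖) ^ 2)) :
    MemLp (fun γ : Ed d => (1 + ‖γ‖ ^ 2) ^ ((s : ℝ)/2) * ‖sigmaHat d σ γ‖) 2
      (volume : Measure (Ed d)) := by
  have hmeas : AEStronglyMeasurable
      (fun γ : Ed d => (1 + ‖γ‖ ^ 2) ^ ((s : ℝ)/2) * ‖sigmaHat d σ γ‖) volume := by
    apply Continuous.aestronglyMeasurable
    apply Continuous.mul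
    · exact (continuous_const.add (continuous_norm.pow 2)).rpow_const
        (fun γ => Or.inl (one_add_sq_pos γ).ne')
    · exact continuous_norm.comp (sigmaHat_continuous hσ)
  rw [memLp_two_iff_integrable_sq hmeas]
  apply hH.congr
  filter_upwards with γ
  rw [mul_pow, ← Real.rpow_natCast ((1 + ‖γ‖ ^ 2) ^ ((s : ℝ)/2)) 2,
    ← Real.rpow_mul (one_add_sq_pos γ).le]
  norm_num

lemma v_memL2 (hds : d < s) :
    MemLp (fun γ : Ed d => (1 + ‖γ‖ ^ 2) ^ (-((s : ℝ)/2))) 2 (volume : Measure (Ed d)) := by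
  have hmeas : AEStronglyMeasurable
      (fun γ : Ed d => (1 + ‖γ‖ ^ 2) ^ (-((s : ℝ)/2))) (volume : Measure (Ed d)) :=
    (Continuous.aestronglyMeasurable <|
      (continuous_const.add (continuous_norm.pow 2)).rpow_const
        (fun γ => Or.inl (one_add_sq_pos γ).ne'))
  rw [memLp_two_iff_integrable_sq hmeas]
  have hint : Integrable (fun γ : Ed d => ((1:ℝ) + ‖γ‖ ^ 2) ^ (-(2*(s:ℝ))/2)) volume := by
    apply integrable_rpow_neg_one_add_norm_sq
    rw [finrank_euclideanSpace_fin]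
    have h1 : (d:ℝ) < (s:ℝ) := by exact_mod_cast hds
    have h2 : (0:ℝ) ≤ (s:ℝ) := Nat.cast_nonneg s
    linarith
  apply hint.congr
  filter_upwards with γ
  rw [← Real.rpow_natCast ((1 + ‖γ‖ ^ 2) ^ (-((s : ℝ)/2))) 2,
    ← Real.rpow_mul (one_add_sq_pos γ).le]
  norm_num
  ring_nf
  rw [Real.rpow_neg (one_add_sq_pos γ).le, Real.rpow_natCast, inv_pow]

lemma g_integrable (hσ : Integrable σ) (hds : d < s)
    (hH : Integrable (fun γ : Ed d =>
      (1 + ‖γ‖ ^ 2) ^ (s : ℝ) * (‖sigmaHat d σ γ‖) ^ 2)) :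
    Integrable (fun γ : Ed d => ‖sigmaHat d σ γ‖) volume := by
  have h := memLp_one_iff_integrable.mp <| (u_memL2 hσ hH).smul (v_memL2 hds)
    (p := 2) (q := 2) (r := 1)
  apply h.congr
  filter_upwards with γ
  show (fun γ : Ed d => (1 + ‖γ‖ ^ 2) ^ (-((s : ℝ)/2))) γ •
    (fun γ : Ed d => (1 + ‖γ‖ ^ 2) ^ ((s : ℝ)/2) * ‖sigmaHat d σ γ‖) γ = _
  simp only [smul_eq_mul]
  rw [← mul_assoc, ← Real.rpow_add (one_add_sq_pos γ)]
  norm_num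
end
noncomputable section
variable {d s : ℕ} {σ : Ed d → ℝ}

lemma norm_fourier_eq (σ : Ed d → ℝ) (w : Ed d) :
    ‖𝓕 (fun z : Ed d => (σ z : ℂ)) w‖ = ‖sigmaHat d σ ((2 * Real.pi) • w)‖ := by
  rw [fourier_eq_sigmaHat]

lemma fourier_integrable (hσ : Integrable σ) (hds : d < s)
    (hH : Integrable (fun γ : Ed d =>
      (1 + ‖γ‖ ^ 2) ^ (s : ℝ) * (‖sigmaHat d σ γ‖) ^ 2)) :
    Integrable (𝓕 (fun z : Ed d => (σ z : ℂ))) volume := by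
  have hgP : Integrable (fun w : Ed d =>
      ‖sigmaHat d σ ((2 * Real.pi) • w)‖) volume :=
    (g_integrable hσ hds hH).comp_smul (by positivity)
  have hmeas : AEStronglyMeasurable (𝓕 (fun z : Ed d => (σ z : ℂ))) volume :=
    (VectorFourier.fourierIntegral_continuous Real.continuous_fourierChar (innerSL ℝ).continuous₂
      hσ.ofReal).aestronglyMeasurable
  rw [← integrable_norm_iff hmeas]
  exact hgP.congr (by filter_upwards with w; rw [norm_fourier_eq])

lemma abs_le_integral_fourier (hσc : Continuous σ) (hσ : Integrable σ) (hds : d < s)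
    (hH : Integrable (fun γ : Ed d =>
      (1 + ‖γ‖ ^ 2) ^ (s : ℝ) * (‖sigmaHat d σ γ‖) ^ 2)) (x : Ed d) :
    |σ x| ≤ ∫ w : Ed d, ‖sigmaHat d σ ((2 * Real.pi) • w)‖ := by
  have hf : Integrable (fun z : Ed d => (σ z : ℂ)) := hσ.ofReal
  have hfc : Continuous (fun z : Ed d => (σ z : ℂ)) := Complex.continuous_ofReal.comp hσc
  have hinv := hfc.fourierInv_fourier_eq hf (fourier_integrable hσ hds hH)
  have h1 : |σ x| = ‖𝓕⁻ (𝓕 (fun z : Ed d => (σ z : ℂ))) x‖ := by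
    rw [hinv, Complex.norm_real, Real.norm_eq_abs]
  rw [h1, Real.fourierInv_eq]
  refine le_trans (norm_integral_le_integral_norm _) (le_of_eq ?_)
  congr 1; ext w
  rw [← norm_fourier_eq]
  simp [Circle.smul_def, norm_mul, Circle.norm_coe]
end
noncomputable section
variable {d s : ℕ} {σ : Ed d → ℝ}

lemma aux_cont_rpow (c : ℝ) : Continuous (fun γ : Ed d => (1 + ‖γ‖ ^ 2) ^ c) :=
  (continuous_const.add (continuous_norm.pow 2)).rpow_const
    (fun γ => Or.inl (one_add_sq_pos γ).ne')

lemma main_integral_bound (hd2 : 0 < d) (hσc : Continuous σ) (hσ : Integrable σ) (hds : d < s)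
    (hH : Integrable (fun γ : Ed d =>
      (1 + ‖γ‖ ^ 2) ^ (s : ℝ) * (‖sigmaHat d σ γ‖) ^ 2))
    {k B : ℝ} (hk : 1 < k) (hB : 0 ≤ B)
    (hup : ∀ γ : Ed d, ‖γ‖ ≤ k → ‖sigmaHat d σ γ‖ ≤ B) (x : Ed d) :
    |σ x| ≤ ((volume (ball (0 : Ed d) 1)).toReal * B +
        Real.sqrt (∫ γ : Ed d, (1 + ‖γ‖ ^ 2) ^ (s : ℝ) * (‖sigmaHat d σ γ‖) ^ 2) *
        Real.sqrt (∫ w : Ed d, ((1:ℝ) + ‖w‖ ^ 2) ^ (-(d:ℝ))) * k⁻¹) *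
      k ^ ((d : ℝ) / (s : ℝ)) := by
  haveI : Nonempty (Fin d) := ⟨⟨0, hd2⟩⟩
  have hk0 : (0:ℝ) < k := lt_trans one_pos hk
  have hs0 : (0:ℝ) < (s:ℝ) := by exact_mod_cast (by omega : 0 < s)
  set P : ℝ := 2 * Real.pi with hPdef
  have hP1 : (1:ℝ) ≤ P := by rw [hPdef]; nlinarith [Real.pi_gt_three]
  have hP0 : (0:ℝ) < P := lt_of_lt_of_le one_pos hP1
  set ρ : ℝ := k ^ ((1:ℝ)/(s:ℝ)) with hρdef
  have hρ0 : (0:ℝ) < ρ := Real.rpow_pos_of_pos hk0 _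
  have hρ1 : (1:ℝ) ≤ ρ := Real.one_le_rpow hk.le (by positivity)
  have hρk : ρ ≤ k := by
    calc ρ ≤ k ^ (1:ℝ) := Real.rpow_le_rpow_of_exponent_le hk.le
            (by rw [div_le_one hs0]; exact_mod_cast Nat.one_le_iff_ne_zero.mpr (by omega))
    _ = k := Real.rpow_one k
  have hρd : ρ ^ d = k ^ ((d:ℝ)/(s:ℝ)) := by
    rw [hρdef, ← Real.rpow_natCast (k ^ ((1:ℝ)/(s:ℝ))) d, ← Real.rpow_mul hk0.le]
    congr 1
    field_simp
  set t : Set (Ed d) := ball (0 : Ed d) (ρ/P) with htdef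
  set G : Ed d → ℝ := fun w => ‖sigmaHat d σ (P • w)‖ with hGdef
  have hGint : Integrable G := (g_integrable hσ hds hH).comp_smul hP0.ne'
  have hsplit : ∫ w, G w = (∫ w in t, G w) + ∫ w in tᶜ, G w :=
    (integral_add_compl measurableSet_ball hGint).symm
  -- head bound
  have hGle : ∀ w ∈ t, G w ≤ B := by
    intro w hw
    apply hup
    rw [norm_smul, Real.norm_of_nonneg hP0.le]
    have : ‖w‖ < ρ/P := by simpa [htdef] using hw
    calc P * ‖w‖ ≤ P * (ρ/P) := by nlinarith [norm_nonneg w]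
      _ = ρ := by field_simp
      _ ≤ k := hρk
  have hhead : (∫ w in t, G w) ≤ ρ ^ d * (volume (ball (0 : Ed d) 1)).toReal * B := by
    calc (∫ w in t, G w) ≤ ∫ _ in t, B :=
          setIntegral_mono_on hGint.integrableOn
            (integrableOn_const measure_ball_lt_top.ne) measurableSet_ball hGle
      _ = (volume t).toReal • B := setIntegral_const B
      _ = (ρ/P) ^ d * (volume (ball (0 : Ed d) 1)).toReal * B := by
          rw [htdef, Measure.addHaar_ball volume 0 (by positivity), ENNReal.toReal_mul,
            ENNReal.toReal_ofReal (by positivity), finrank_euclideanSpace_fin, smul_eq_mul]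
      _ ≤ ρ ^ d * (volume (ball (0 : Ed d) 1)).toReal * B := by
          have h1 : (ρ/P) ^ d ≤ ρ ^ d :=
            pow_le_pow_left₀ (by positivity) (div_le_self hρ0.le hP1) d
          have h2 : (0:ℝ) ≤ (volume (ball (0 : Ed d) 1)).toReal := ENNReal.toReal_nonneg
          have h3 : (0:ℝ) ≤ (ρ/P)^d := by positivity
          nlinarith [mul_le_mul_of_nonneg_right h1 h2]
  -- tail bound
  set N2 : ℝ := ∫ γ : Ed d, (1 + ‖γ‖ ^ 2) ^ (s : ℝ) * (‖sigmaHat d σ γ‖) ^ 2 with hN2def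
  set J : ℝ := ∫ w : Ed d, ((1:ℝ) + ‖w‖ ^ 2) ^ (-(d:ℝ)) with hJdef
  have hN2 : (0:ℝ) ≤ N2 := integral_nonneg (fun γ => by positivity)
  have hJ0 : (0:ℝ) ≤ J := integral_nonneg (fun w => by positivity)
  have hDint : Integrable (fun w : Ed d => ((1:ℝ) + ‖w‖ ^ 2) ^ (-(d:ℝ))) (volume : Measure (Ed d)) := by
    have h := integrable_rpow_neg_one_add_norm_sq (E := Ed d) (μ := volume) (r := 2*(d:ℝ)) (by
      rw [finrank_euclideanSpace_fin]
      have : (0:ℝ) < (d:ℝ) := by exact_mod_cast hd2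
      linarith)
    simpa [show -(2*(d:ℝ))/2 = -(d:ℝ) by ring] using h
  set U : Ed d → ℝ := fun w => (1 + ‖P • w‖ ^ 2) ^ ((s:ℝ)/2) * ‖sigmaHat d σ (P • w)‖ with hUdef
  set Vv : Ed d → ℝ := fun w => (1 + ‖P • w‖ ^ 2) ^ (-((s:ℝ)/2)) with hVdef
  have hUnn : ∀ w, 0 ≤ U w := fun w => by rw [hUdef]; positivity
  have hVnn : ∀ w, 0 ≤ Vv w := fun w => by rw [hVdef]; positivity
  have hGUV : ∀ w, G w = U w * Vv w := by
    intro w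
    rw [hGdef, hUdef, hVdef]
    simp only []
    rw [mul_comm ((1 + ‖P • w‖ ^ 2) ^ ((s:ℝ)/2)) _, mul_assoc,
      ← Real.rpow_add (one_add_sq_pos (P • w))]
    norm_num
  have hUcont : Continuous U := by
    rw [hUdef]
    exact ((aux_cont_rpow ((s:ℝ)/2)).comp (continuous_const_smul P)).mul
      ((continuous_norm.comp (sigmaHat_continuous hσ)).comp (continuous_const_smul P))
  have hVcont : Continuous Vv := (aux_cont_rpow (-((s:ℝ)/2))).comp (continuous_const_smul P)
  have hUsq : Integrable (fun w => U w ^ 2) := by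
    apply (hH.comp_smul (R := P) hP0.ne').congr
    filter_upwards with w
    rw [hUdef]
    simp only []
    rw [mul_pow, ← Real.rpow_natCast ((1 + ‖P • w‖ ^ 2) ^ ((s:ℝ)/2)) 2,
      ← Real.rpow_mul (one_add_sq_pos (P • w)).le]
    norm_num
  have hVsq : Integrable (fun w => Vv w ^ 2) := by
    have hmeas : AEStronglyMeasurable (fun γ : Ed d => (1 + ‖γ‖ ^ 2) ^ (-((s:ℝ)/2)))
        (volume : Measure (Ed d)) := (aux_cont_rpow _).aestronglyMeasurable
    exact ((memLp_two_iff_integrable_sq hmeas).mp (v_memL2 hds)).comp_smul hP0.ne'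
  have hUm : MemLp U 2 (volume.restrict tᶜ) :=
    ((memLp_two_iff_integrable_sq hUcont.aestronglyMeasurable).mpr hUsq).restrict _
  have hVm : MemLp Vv 2 (volume.restrict tᶜ) :=
    ((memLp_two_iff_integrable_sq hVcont.aestronglyMeasurable).mpr hVsq).restrict _
  have hconj : Real.HolderConjugate 2 2 := Real.HolderConjugate.two_two
  have hholder := integral_mul_le_Lp_mul_Lq_of_nonneg hconj
    (Filter.Eventually.of_forall hUnn) (Filter.Eventually.of_forall hVnn)
    (by rw [ENNReal.ofReal_ofNat]; exact hUm) (by rw [ENNReal.ofReal_ofNat]; exact hVm)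
  have hrpow2 : ∀ a : ℝ, 0 ≤ a → a ^ (2:ℝ) = a ^ 2 := by
    intro a ha
    rw [show (2:ℝ) = ((2:ℕ):ℝ) by norm_num, Real.rpow_natCast]
  -- factor 1
  have hf1 : (∫ w in tᶜ, U w ^ (2:ℝ)) ≤ N2 := by
    have e1 : (∫ w in tᶜ, U w ^ (2:ℝ)) = ∫ w in tᶜ, U w ^ 2 := by
      apply setIntegral_congr_fun (measurableSet_ball.compl)
      intro w _; exact hrpow2 _ (hUnn w)
    rw [e1]
    calc (∫ w in tᶜ, U w ^ 2) ≤ ∫ w, U w ^ 2 :=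
          setIntegral_le_integral hUsq (Filter.Eventually.of_forall (fun w => by positivity))
      _ = (P ^ d)⁻¹ • N2 := by
          rw [hN2def]
          have := Measure.integral_comp_smul_of_nonneg (μ := (volume : Measure (Ed d)))
            (fun γ : Ed d => (1 + ‖γ‖ ^ 2) ^ (s : ℝ) * ‖sigmaHat d σ γ‖ ^ 2) P
            (hR := hP0.le)
          rw [finrank_euclideanSpace_fin] at this
          rw [← this]
          apply integral_congr_ae
          filter_upwards with w
          rw [hUdef]
          simp only []
          rw [mul_pow, ← Real.rpow_natCast ((1 + ‖P • w‖ ^ 2) ^ ((s:ℝ)/2)) 2,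
            ← Real.rpow_mul (one_add_sq_pos (P • w)).le]
          norm_num
      _ ≤ N2 := by
          rw [smul_eq_mul]
          have h1 : (0:ℝ) < P ^ d := by positivity
          have h2 : (1:ℝ) ≤ P ^ d := one_le_pow₀ hP1
          calc (P ^ d)⁻¹ * N2 ≤ 1 * N2 := by
                apply mul_le_mul_of_nonneg_right _ hN2
                rw [inv_le_one_iff₀]; right; exact h2
            _ = N2 := one_mul N2
  -- factor 2
  have hf2 : (∫ w in tᶜ, Vv w ^ (2:ℝ)) ≤ ρ ^ (2*((d:ℝ) - s)) * J := by
    have e1 : (∫ w in tᶜ, Vv w ^ (2:ℝ)) = ∫ w in tᶜ, Vv w ^ 2 := by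
      apply setIntegral_congr_fun (measurableSet_ball.compl)
      intro w _; exact hrpow2 _ (hVnn w)
    rw [e1]
    have hpoint : ∀ w ∈ tᶜ, Vv w ^ 2 ≤ ρ ^ (2*((d:ℝ) - s)) * ((1:ℝ) + ‖w‖ ^ 2) ^ (-(d:ℝ)) := by
      intro w hw
      have hwn : ρ/P ≤ ‖w‖ := by
        have := hw
        rw [Set.mem_compl_iff, htdef, mem_ball, dist_zero_right, not_lt] at this
        exact this
      have hPw : ρ ≤ ‖P • w‖ := by
        rw [norm_smul, Real.norm_of_nonneg hP0.le]
        calc ρ = P * (ρ/P) := by field_simp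
          _ ≤ P * ‖w‖ := by nlinarith
      have hY1 : ρ^2 ≤ 1 + ‖P • w‖ ^ 2 := by nlinarith [norm_nonneg (P • w)]
      have hY2 : 1 + ‖w‖ ^ 2 ≤ 1 + ‖P • w‖ ^ 2 := by
        have : ‖w‖ ≤ ‖P • w‖ := by
          rw [norm_smul, Real.norm_of_nonneg hP0.le]
          nlinarith [norm_nonneg w]
        nlinarith [norm_nonneg w]
      have eV : Vv w ^ 2 = (1 + ‖P • w‖ ^ 2) ^ (-(s:ℝ)) := by
        rw [hVdef]
        simp only []
        rw [← Real.rpow_natCast ((1 + ‖P • w‖ ^ 2) ^ (-((s:ℝ)/2))) 2,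
          ← Real.rpow_mul (one_add_sq_pos (P • w)).le]
        norm_num
      have esplit : ((1:ℝ) + ‖P • w‖ ^ 2) ^ (-(s:ℝ)) =
          (1 + ‖P • w‖ ^ 2) ^ ((d:ℝ) - s) * (1 + ‖P • w‖ ^ 2) ^ (-(d:ℝ)) := by
        rw [← Real.rpow_add (one_add_sq_pos (P • w))]
        ring_nf
      have hb1 : ((1:ℝ) + ‖P • w‖ ^ 2) ^ ((d:ℝ) - s) ≤ ρ ^ (2*((d:ℝ) - s)) := by
        have hds' : (d:ℝ) - s ≤ 0 := by
          have : (d:ℝ) < (s:ℝ) := by exact_mod_cast hds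
          linarith
        have h := Real.rpow_le_rpow_of_nonpos (by positivity : (0:ℝ) < ρ^2) hY1 hds'
        calc ((1:ℝ) + ‖P • w‖ ^ 2) ^ ((d:ℝ) - s) ≤ (ρ^2) ^ ((d:ℝ) - s) := h
          _ = ρ ^ (2*((d:ℝ) - s)) := by
              rw [← Real.rpow_natCast ρ 2, ← Real.rpow_mul hρ0.le]
              norm_num
      have hb2 : ((1:ℝ) + ‖P • w‖ ^ 2) ^ (-(d:ℝ)) ≤ ((1:ℝ) + ‖w‖ ^ 2) ^ (-(d:ℝ)) :=
        Real.rpow_le_rpow_of_nonpos (one_add_sq_pos w) hY2 (neg_nonpos.mpr (Nat.cast_nonneg d))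
      calc Vv w ^ 2 = _ := eV
        _ = (1 + ‖P • w‖ ^ 2) ^ ((d:ℝ) - s) * (1 + ‖P • w‖ ^ 2) ^ (-(d:ℝ)) := esplit
        _ ≤ ρ ^ (2*((d:ℝ) - s)) * ((1:ℝ) + ‖w‖ ^ 2) ^ (-(d:ℝ)) := by
            exact mul_le_mul hb1 hb2 (Real.rpow_nonneg (one_add_sq_pos _).le _)
              (Real.rpow_nonneg hρ0.le _)
    calc (∫ w in tᶜ, Vv w ^ 2)
        ≤ ∫ w in tᶜ, ρ ^ (2*((d:ℝ) - s)) * ((1:ℝ) + ‖w‖ ^ 2) ^ (-(d:ℝ)) :=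
          setIntegral_mono_on hVsq.integrableOn
            ((hDint.const_mul _).integrableOn) measurableSet_ball.compl hpoint
      _ = ρ ^ (2*((d:ℝ) - s)) * ∫ w in tᶜ, ((1:ℝ) + ‖w‖ ^ 2) ^ (-(d:ℝ)) := by
          simp_rw [← smul_eq_mul]
          rw [integral_smul]
      _ ≤ ρ ^ (2*((d:ℝ) - s)) * J :=
          mul_le_mul_of_nonneg_left
            (setIntegral_le_integral hDint (Filter.Eventually.of_forall (fun w => by positivity)))
            (by positivity)
  -- put Hölder together
  have htail : (∫ w in tᶜ, G w) ≤ Real.sqrt N2 * (ρ ^ ((d:ℝ) - s) * Real.sqrt J) := by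
    have e0 : (∫ w in tᶜ, G w) = ∫ w in tᶜ, U w * Vv w := by
      apply setIntegral_congr_fun (measurableSet_ball.compl)
      intro w _; exact hGUV w
    rw [e0]
    refine le_trans hholder ?_
    have hi1 : (0:ℝ) ≤ ∫ w in tᶜ, U w ^ (2:ℝ) :=
      setIntegral_nonneg measurableSet_ball.compl (fun w _ => by positivity)
    have hi2 : (0:ℝ) ≤ ∫ w in tᶜ, Vv w ^ (2:ℝ) :=
      setIntegral_nonneg measurableSet_ball.compl (fun w _ => by positivity)
    have hsq1 : (∫ w in tᶜ, U w ^ (2:ℝ)) ^ ((1:ℝ)/2) ≤ Real.sqrt N2 := by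
      rw [Real.sqrt_eq_rpow]
      exact Real.rpow_le_rpow hi1 hf1 (by norm_num)
    have hsq2 : (∫ w in tᶜ, Vv w ^ (2:ℝ)) ^ ((1:ℝ)/2) ≤ ρ ^ ((d:ℝ) - s) * Real.sqrt J := by
      have h1 : (∫ w in tᶜ, Vv w ^ (2:ℝ)) ^ ((1:ℝ)/2) ≤ (ρ ^ (2*((d:ℝ) - s)) * J) ^ ((1:ℝ)/2) :=
        Real.rpow_le_rpow hi2 hf2 (by norm_num)
      refine h1.trans (le_of_eq ?_)
      rw [← Real.sqrt_eq_rpow, Real.sqrt_mul (by positivity)]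
      congr 1
      have : ρ ^ (2*((d:ℝ) - s)) = (ρ ^ ((d:ℝ) - s)) ^ 2 := by
        rw [← Real.rpow_natCast (ρ ^ ((d:ℝ) - s)) 2, ← Real.rpow_mul hρ0.le]
        ring_nf
      rw [this, Real.sqrt_sq (by positivity)]
    exact mul_le_mul hsq1 hsq2 (Real.rpow_nonneg hi2 _) (Real.sqrt_nonneg _)
  -- assemble
  have hρds : ρ ^ ((d:ℝ) - s) = k ^ ((d:ℝ)/(s:ℝ)) * k⁻¹ := by
    rw [hρdef, ← Real.rpow_mul hk0.le]
    have : (1:ℝ)/(s:ℝ) * ((d:ℝ) - s) = (d:ℝ)/(s:ℝ) - 1 := by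
      field_simp
    rw [this, Real.rpow_sub hk0, Real.rpow_one, div_eq_mul_inv]
  have hmain := abs_le_integral_fourier hσc hσ hds hH x
  have hGid : (∫ w : Ed d, ‖sigmaHat d σ ((2 * Real.pi) • w)‖) = (∫ w, G w) := by rfl
  rw [hGid, hsplit] at hmain
  rw [hρds] at htail
  have hkpos : (0:ℝ) < k ^ ((d:ℝ)/(s:ℝ)) := Real.rpow_pos_of_pos hk0 _
  have hVd0 : (0:ℝ) ≤ (volume (ball (0 : Ed d) 1)).toReal := ENNReal.toReal_nonneg
  calc |σ x| ≤ (∫ w in t, G w) + ∫ w in tᶜ, G w := hmain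
    _ ≤ (ρ ^ d * (volume (ball (0 : Ed d) 1)).toReal * B) +
        Real.sqrt N2 * (k ^ ((d:ℝ)/(s:ℝ)) * k⁻¹ * Real.sqrt J) := add_le_add hhead htail
    _ = ((volume (ball (0 : Ed d) 1)).toReal * B +
        Real.sqrt N2 * Real.sqrt J * k⁻¹) * k ^ ((d : ℝ) / (s : ℝ)) := by
        rw [hρd]; ring
end

noncomputable section

lemma abs_betaD_pos {d n : ℕ} (hn : 1 ≤ n) :
    0 < ‖(betaD d) ^ 2 / (n : ℂ) ^ 2‖ := by
  apply norm_pos_iff.mpr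
  apply div_ne_zero (pow_ne_zero _ (betaD_ne_zero d))
  apply pow_ne_zero
  exact_mod_cast Nat.cast_ne_zero.mpr (by omega)

lemma habs_upper_aux (w R : ℂ) : ‖w‖ ≤ ‖w + R‖ + ‖R‖ := by
  have h := norm_sub_le (w + R) R
  rw [add_sub_cancel_right] at h
  simpa using h

lemma habs_lower_aux (c : ℝ) (R : ℂ) (hc : 0 ≤ c) :
    c - ‖R‖ ≤ ‖(c : ℂ) + R‖ := by
  have h := norm_sub_le ((c : ℂ) + R) R
  rw [add_sub_cancel_right] at h
  rw [Complex.norm_real, Real.norm_eq_abs, abs_of_nonneg hc] at h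
  linarith

/-- Upper estimate: extract `σ̂` from `F_PL`. -/
lemma sigmaHat_extract {d n : ℕ} (hn : 1 ≤ n) {m C₁ : ℝ} {σ : Ed d → ℝ}
    {r : Ed d → Ed d → ℂ} {k : ℝ} (hk1 : 1 < k)
    (hr : ∀ ξ : Ed d, 1 < ‖ξ‖ →
      (∫ z in Metric.ball (0 : Ed d) 1, ‖r z ξ‖) ≤ C₁ * ‖ξ‖ ^ (-(m + 1)))
    (x y : Ed d) (hy : ‖y‖ = 1) :
    k ^ (-m) * ‖sigmaHat d σ (k • (x + y))‖ ≤
      ‖FPL d n m σ r k x y‖ /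
        (‖(betaD d) ^ 2 / (n : ℂ) ^ 2‖ * k ^ ((d : ℝ) + 1 - 4 * (n : ℝ)))
      + C₁ * k ^ (-(m + 1)) := by
  have hk0 : (0:ℝ) < k := lt_trans one_pos hk1
  have hA0 : 0 < ‖(betaD d) ^ 2 / (n : ℂ) ^ 2‖ := abs_betaD_pos hn
  have hK10 : (0:ℝ) < k ^ ((d : ℝ) + 1 - 4 * (n : ℝ)) := Real.rpow_pos_of_pos hk0 _
  have habs := FPL_abs_eq (σ := σ) (r := r) (n := n) (m := m) hk0 x y
  set T : ℂ := ((k ^ (-m) : ℝ) : ℂ) * sigmaHat d σ (k • (x + y)) with hT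
  set R : ℂ := ∫ z in Metric.ball (0 : Ed d) 1,
      r z (-(k • y)) * Complex.exp (-Complex.I * ((inner ℝ (k • (x + y)) z : ℝ) : ℂ)) with hR
  have hsum : ‖T + R‖ = ‖FPL d n m σ r k x y‖ /
      (‖(betaD d) ^ 2 / (n : ℂ) ^ 2‖ * k ^ ((d : ℝ) + 1 - 4 * (n : ℝ))) := by
    have hAK : ‖(betaD d) ^ 2 / (n : ℂ) ^ 2‖ * k ^ ((d : ℝ) + 1 - 4 * (n : ℝ)) ≠ 0 := by
      positivity
    rw [habs, eq_div_iff hAK]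
    ring
  have hTabs : ‖T‖ = k ^ (-m) * ‖sigmaHat d σ (k • (x + y))‖ := by
    rw [hT, norm_mul, Complex.norm_real, Real.norm_eq_abs, abs_of_pos (Real.rpow_pos_of_pos hk0 _)]
  have hRle : ‖R‖ ≤ C₁ * k ^ (-(m + 1)) := rTerm_bound hr hk1 y hy _
  calc k ^ (-m) * ‖sigmaHat d σ (k • (x + y))‖ = ‖T‖ := hTabs.symm
    _ ≤ ‖T + R‖ + ‖R‖ := habs_upper_aux T R
    _ ≤ _ := by rw [hsum]; linarith

/-- Lower estimate for `F_PL(x, -x)`. -/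
lemma FPL_lower {d n : ℕ} (hn : 1 ≤ n) {m C₁ : ℝ} {σ : Ed d → ℝ}
    {r : Ed d → Ed d → ℂ} {k : ℝ} (hk1 : 1 < k) (hσ0 : ∀ z, 0 ≤ σ z) (hσi : Integrable σ)
    (hr : ∀ ξ : Ed d, 1 < ‖ξ‖ →
      (∫ z in Metric.ball (0 : Ed d) 1, ‖r z ξ‖) ≤ C₁ * ‖ξ‖ ^ (-(m + 1)))
    (x : Ed d) (hx : ‖x‖ = 1) :
    ‖(betaD d) ^ 2 / (n : ℂ) ^ 2‖ * k ^ ((d : ℝ) + 1 - 4 * (n : ℝ)) *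
      (k ^ (-m) * (∫ z, σ z) - C₁ * k ^ (-(m + 1))) ≤
      ‖FPL d n m σ r k x (-x)‖ := by
  have hk0 : (0:ℝ) < k := lt_trans one_pos hk1
  have hA0 : 0 < ‖(betaD d) ^ 2 / (n : ℂ) ^ 2‖ := abs_betaD_pos hn
  have hK10 : (0:ℝ) < k ^ ((d : ℝ) + 1 - 4 * (n : ℝ)) := Real.rpow_pos_of_pos hk0 _
  have habs := FPL_abs_eq (σ := σ) (r := r) (n := n) (m := m) hk0 x (-x)
  rw [add_neg_cancel, smul_zero, sigmaHat_zero] at habs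
  rw [habs]
  apply mul_le_mul_of_nonneg_left _ (by positivity)
  set R : ℂ := ∫ z in Metric.ball (0 : Ed d) 1,
      r z (-(k • (-x))) * Complex.exp (-Complex.I * ((inner ℝ (0 : Ed d) z : ℝ) : ℂ)) with hR
  have hRle : ‖R‖ ≤ C₁ * k ^ (-(m + 1)) :=
    rTerm_bound hr hk1 (-x) (by rw [norm_neg, hx]) _
  have hI0 : (0:ℝ) ≤ ∫ z, σ z := integral_nonneg (fun z => hσ0 z)
  have h1 : ((k ^ (-m) : ℝ) : ℂ) * ((∫ z, σ z : ℝ) : ℂ) = (((k ^ (-m) * ∫ z, σ z : ℝ)) : ℂ) := by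
    push_cast; ring
  rw [h1]
  have h2 := habs_lower_aux (k ^ (-m) * ∫ z, σ z) R (by positivity)
  linarith
/-- Uniform upper bound for `|F_PL|`. -/
lemma FPL_upper {d n : ℕ} (hn : 1 ≤ n) {m C₁ : ℝ} {σ : Ed d → ℝ}
    {r : Ed d → Ed d → ℂ} {k : ℝ} (hk1 : 1 < k) (hσ0 : ∀ z, 0 ≤ σ z)
    (hr : ∀ ξ : Ed d, 1 < ‖ξ‖ →
      (∫ z in Metric.ball (0 : Ed d) 1, ‖r z ξ‖) ≤ C₁ * ‖ξ‖ ^ (-(m + 1)))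
    (x y : Ed d) (hy : ‖y‖ = 1) :
    ‖FPL d n m σ r k x y‖ ≤
      ‖(betaD d) ^ 2 / (n : ℂ) ^ 2‖ * k ^ ((d : ℝ) + 1 - 4 * (n : ℝ)) *
      (k ^ (-m) * (∫ z, σ z) + C₁ * k ^ (-(m + 1))) := by
  have hk0 : (0:ℝ) < k := lt_trans one_pos hk1
  rw [FPL_abs_eq (σ := σ) (r := r) (n := n) (m := m) hk0 x y]
  apply mul_le_mul_of_nonneg_left _ (by positivity)
  refine le_trans (norm_add_le _ _) (add_le_add ?_ (rTerm_bound hr hk1 y hy _))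
  rw [norm_mul, Complex.norm_real, Real.norm_eq_abs, abs_of_pos (Real.rpow_pos_of_pos hk0 _)]
  exact mul_le_mul_of_nonneg_left (sigmaHat_abs_le hσ0 _) (Real.rpow_pos_of_pos hk0 _).le

end

end AuxLemmas

/-- Lipschitz-type stability, polyharmonic case. Suppose moreover that
`σ` is continuous and not identically zero, `m ∈ (d+2−4n, d]`, `s` is an integer with
`s > max{d/4 + 2n − 1, d}`, and `N = (∫ (1+|γ|²)^s |σ̂(γ)|² dγ)^{1/2} < ∞`. Then there is
`C > 0`, depending only on `d, n, m, s, C₁` (independent of `k` and of `σ`), such that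
for every `k > max{2C₁/‖σ‖_{L¹(B₁)}, 1}`,
`‖σ‖_{L^∞(B₁)} ≤ C k^{d/s + m + 4n − d − 1} (1 + N) M_PL(k)`. -/
theorem statement4 (d n : ℕ) (hd : d = 2 ∨ d = 3) (hn : 1 ≤ n) (m C₁ : ℝ) (hC₁ : 0 < C₁)
    (hm : (d : ℝ) + 2 - 4 * (n : ℝ) < m ∧ m ≤ (d : ℝ))
    (s : ℕ) (hs₁ : (d : ℝ) / 4 + 2 * (n : ℝ) - 1 < (s : ℝ)) (hs₂ : (d : ℝ) < (s : ℝ)) :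
    ∃ C > (0 : ℝ), ∀ (σ : Ed d → ℝ) (r : Ed d → Ed d → ℂ),
      Integrable σ → (∀ z, 0 ≤ σ z) → (∀ z ∉ Metric.ball (0 : Ed d) 1, σ z = 0) →
      Continuous σ → σ ≠ 0 →
      (∀ ξ, Integrable (fun z => r z ξ)) →
      (∀ ξ : Ed d, ∀ z ∉ Metric.ball (0 : Ed d) 1, r z ξ = 0) →
      (∀ ξ : Ed d, 1 < ‖ξ‖ →
        (∫ z in Metric.ball (0 : Ed d) 1, ‖r z ξ‖) ≤ C₁ * ‖ξ‖ ^ (-(m + 1))) →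
      Integrable (fun γ : Ed d =>
        (1 + ‖γ‖ ^ 2) ^ (s : ℝ) * (‖sigmaHat d σ γ‖) ^ 2) →
      ∀ k : ℝ, max (2 * C₁ / ∫ z in Metric.ball (0 : Ed d) 1, σ z) 1 < k →
      ∀ x ∈ Metric.ball (0 : Ed d) 1,
        |σ x| ≤ C * k ^ ((d : ℝ) / (s : ℝ) + m + 4 * (n : ℝ) - (d : ℝ) - 1) *
          (1 + Real.sqrt (∫ γ : Ed d,
            (1 + ‖γ‖ ^ 2) ^ (s : ℝ) * (‖sigmaHat d σ γ‖) ^ 2)) *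
          MPL d n m σ r k := by
  have hd2 : 0 < d := by rcases hd with h|h <;> omega
  have hd2' : 2 ≤ d := by rcases hd with h|h <;> omega
  have hds : d < s := by exact_mod_cast hs₂
  haveI : Nonempty (Fin d) := ⟨⟨0, hd2⟩⟩
  set A : ℝ := ‖(betaD d) ^ 2 / (n : ℂ) ^ 2‖ with hAdef
  have hA0 : 0 < A := abs_betaD_pos hn
  set Vd : ℝ := (volume (Metric.ball (0 : Ed d) 1)).toReal with hVddef
  have hVd0 : 0 < Vd := by
    rw [hVddef]
    exact ENNReal.toReal_pos (Metric.measure_ball_pos volume 0 one_pos).ne' measure_ball_lt_top.ne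
  set Jc : ℝ := ∫ w : Ed d, ((1:ℝ) + ‖w‖ ^ 2) ^ (-(d:ℝ)) with hJdef
  have hJc0 : 0 ≤ Real.sqrt Jc := Real.sqrt_nonneg _
  refine ⟨2 * Vd * A⁻¹ + Real.sqrt Jc * A⁻¹ / C₁, by positivity, ?_⟩
  intro σ r hσi hσ0 hσsupp hσc hσne hri hrsupp hrbound hH k hkmax x hx
  have hk1 : 1 < k := lt_of_le_of_lt (le_max_right _ _) hkmax
  have hk0 : (0:ℝ) < k := lt_trans one_pos hk1
  -- the total mass
  have hI₀eq : (∫ z in Metric.ball (0 : Ed d) 1, σ z) = ∫ z, σ z :=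
    setIntegral_eq_integral_of_forall_compl_eq_zero (fun z hz => hσsupp z hz)
  set I₀ : ℝ := ∫ z, σ z with hI₀def
  have hI₀pos : 0 < I₀ := by
    rcases lt_or_eq_of_le (integral_nonneg (f := σ) (fun z => hσ0 z)) with h|h
    · exact h
    · exfalso
      apply hσne
      have hz := (integral_eq_zero_iff_of_nonneg (fun z => hσ0 z) hσi).mp h.symm
      have hz' : σ =ᵐ[(volume : Measure (Ed d))] (fun _ => (0:ℝ)) := hz
      have hz'' := (Continuous.ae_eq_iff_eq (μ := (volume : Measure (Ed d))) hσc
        continuous_const).mp hz'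
      ext z
      exact congrFun hz'' z
  have hkC : 2 * C₁ / I₀ < k := by
    have h := lt_of_le_of_lt (le_max_left _ _) hkmax
    rwa [hI₀eq] at h
  have hCk : C₁ / k < I₀ / 2 := by
    rw [div_lt_iff₀ hI₀pos] at hkC
    rw [div_lt_div_iff₀ hk0 two_pos]
    nlinarith
  -- the sup
  set M : ℝ := MPL d n m σ r k with hMdef
  have hbdd : BddAbove {v : ℝ | ∃ x y : Ed d, ‖x‖ = 1 ∧ ‖y‖ = 1 ∧
      v = ‖FPL d n m σ r k x y‖} := by
    refine ⟨A * k ^ ((d : ℝ) + 1 - 4 * (n : ℝ)) * (k ^ (-m) * I₀ + C₁ * k ^ (-(m + 1))), ?_⟩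
    rintro v ⟨x, y, hxu, hyu, rfl⟩
    exact FPL_upper hn hk1 hσ0 hrbound x y hyu
  have hMle : ∀ x y : Ed d, ‖x‖ = 1 → ‖y‖ = 1 →
      ‖FPL d n m σ r k x y‖ ≤ M :=
    fun x y hxu hyu => le_csSup hbdd ⟨x, y, hxu, hyu, rfl⟩
  obtain ⟨e, he⟩ := Ed.exists_unit hd2'
  have hM0 : 0 ≤ M := le_trans (norm_nonneg _) (hMle e e he he)
  -- rpow bookkeeping
  have hK10 : (0:ℝ) < k ^ ((d:ℝ) + 1 - 4*(n:ℝ)) := Real.rpow_pos_of_pos hk0 _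
  have hKm0 : (0:ℝ) < k ^ (-m) := Real.rpow_pos_of_pos hk0 _
  have hKE0 : (0:ℝ) < k ^ (m + 4*(n:ℝ) - (d:ℝ) - 1) := Real.rpow_pos_of_pos hk0 _
  have hprod : k ^ (-m) * k ^ ((d:ℝ) + 1 - 4*(n:ℝ)) * k ^ (m + 4*(n:ℝ) - (d:ℝ) - 1) = 1 := by
    rw [← Real.rpow_add hk0, ← Real.rpow_add hk0,
      show -m + ((d:ℝ) + 1 - 4*(n:ℝ)) + (m + 4*(n:ℝ) - (d:ℝ) - 1) = 0 by ring, Real.rpow_zero]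
  have hkm1 : k ^ (-(m + 1)) = k ^ (-m) * k⁻¹ := by
    rw [← Real.rpow_neg_one k, ← Real.rpow_add hk0]
    congr 1; ring
  -- lower bound: I₀ ≤ 2 A⁻¹ k^E M
  have hstep : A * k ^ ((d:ℝ) + 1 - 4*(n:ℝ)) * (k ^ (-m) * (I₀ / 2)) ≤ M := by
    refine le_trans ?_ (le_trans (FPL_lower hn hk1 hσ0 hσi hrbound e he)
      (hMle e (-e) he (by rw [norm_neg, he])))
    refine mul_le_mul_of_nonneg_left ?_ (by positivity)
    rw [hkm1]
    have h5 : C₁ * k⁻¹ ≤ I₀ / 2 := by rw [← div_eq_mul_inv]; exact hCk.le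
    have h4 : C₁ * (k ^ (-m) * k⁻¹) ≤ k ^ (-m) * (I₀ / 2) := by
      calc C₁ * (k ^ (-m) * k⁻¹) = k ^ (-m) * (C₁ * k⁻¹) := by ring
        _ ≤ k ^ (-m) * (I₀ / 2) := mul_le_mul_of_nonneg_left h5 hKm0.le
    linarith
  have hI₀le : I₀ ≤ 2 * A⁻¹ * k ^ (m + 4*(n:ℝ) - (d:ℝ) - 1) * M := by
    calc I₀ = (A⁻¹ * A) * (k ^ (-m) * k ^ ((d:ℝ)+1-4*(n:ℝ)) * k ^ (m + 4*(n:ℝ) - (d:ℝ) - 1)) * I₀ := by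
          rw [inv_mul_cancel₀ hA0.ne', hprod]; ring
      _ = (2 * A⁻¹ * k ^ (m + 4*(n:ℝ) - (d:ℝ) - 1)) *
          (A * k ^ ((d:ℝ)+1-4*(n:ℝ)) * (k ^ (-m) * (I₀/2))) := by ring
      _ ≤ (2 * A⁻¹ * k ^ (m + 4*(n:ℝ) - (d:ℝ) - 1)) * M :=
          mul_le_mul_of_nonneg_left hstep (by positivity)
      _ = 2 * A⁻¹ * k ^ (m + 4*(n:ℝ) - (d:ℝ) - 1) * M := by ring
  -- upper bound on σ̂ at low frequencies
  have hupper : ∀ γ : Ed d, ‖γ‖ ≤ k →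
      ‖sigmaHat d σ γ‖ ≤ 2 * (A⁻¹ * k ^ (m + 4*(n:ℝ) - (d:ℝ) - 1) * M) := by
    intro γ hγ
    obtain ⟨xu, yu, hxu, hyu, hxyeq⟩ := exists_unit_pair hd2' hk0 γ (by linarith)
    have hext := sigmaHat_extract (σ := σ) (r := r) hn hk1 hrbound xu yu hyu
    rw [hxyeq] at hext
    have hF : ‖FPL d n m σ r k xu yu‖ / (A * k ^ ((d:ℝ)+1-4*(n:ℝ))) ≤
        M / (A * k ^ ((d:ℝ)+1-4*(n:ℝ))) := by
      gcongr
      exact hMle xu yu hxu hyu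
    have hkm : k ^ m * k ^ (-m) = 1 := by
      rw [← Real.rpow_add hk0]; simp
    have hkmm1 : k ^ m * k ^ (-(m+1)) = k⁻¹ := by
      rw [← Real.rpow_add hk0, show m + -(m+1) = (-1 : ℝ) by ring, Real.rpow_neg_one]
    have hmain : ‖sigmaHat d σ γ‖ ≤
        k ^ m * (M / (A * k ^ ((d:ℝ)+1-4*(n:ℝ)))) + C₁ * k⁻¹ := by
      have h6 : ‖sigmaHat d σ γ‖ =
          k ^ m * (k ^ (-m) * ‖sigmaHat d σ γ‖) := by
        rw [← mul_assoc, hkm, one_mul]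
      rw [h6]
      calc k ^ m * (k ^ (-m) * ‖sigmaHat d σ γ‖)
          ≤ k ^ m * (M / (A * k ^ ((d:ℝ)+1-4*(n:ℝ))) + C₁ * k ^ (-(m+1))) := by
            refine mul_le_mul_of_nonneg_left (le_trans hext ?_) (Real.rpow_pos_of_pos hk0 m).le
            linarith
        _ = k ^ m * (M / (A * k ^ ((d:ℝ)+1-4*(n:ℝ)))) + C₁ * (k ^ m * k ^ (-(m+1))) := by ring
        _ = k ^ m * (M / (A * k ^ ((d:ℝ)+1-4*(n:ℝ)))) + C₁ * k⁻¹ := by rw [hkmm1]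
    have h7 : k ^ m * (M / (A * k ^ ((d:ℝ)+1-4*(n:ℝ)))) =
        A⁻¹ * k ^ (m + 4*(n:ℝ) - (d:ℝ) - 1) * M := by
      have h8 : k ^ m * (k ^ ((d:ℝ)+1-4*(n:ℝ)))⁻¹ = k ^ (m + 4*(n:ℝ) - (d:ℝ) - 1) := by
        rw [← Real.rpow_neg hk0.le, ← Real.rpow_add hk0]; congr 1; ring
      calc k ^ m * (M / (A * k ^ ((d:ℝ)+1-4*(n:ℝ))))
          = (k ^ m * (k ^ ((d:ℝ)+1-4*(n:ℝ)))⁻¹) * A⁻¹ * M := by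
            rw [div_eq_mul_inv, mul_inv]; ring
        _ = A⁻¹ * k ^ (m + 4*(n:ℝ) - (d:ℝ) - 1) * M := by rw [h8]; ring
    have h9 : C₁ * k⁻¹ ≤ A⁻¹ * k ^ (m + 4*(n:ℝ) - (d:ℝ) - 1) * M := by
      have h10 : C₁ * k⁻¹ ≤ I₀ / 2 := by rw [← div_eq_mul_inv]; exact hCk.le
      linarith
    rw [h7] at hmain
    linarith
  -- final application
  have hfin := main_integral_bound hd2 hσc hσi hds hH hk1
    (B := 2 * (A⁻¹ * k ^ (m + 4*(n:ℝ) - (d:ℝ) - 1) * M)) (by positivity) hupper x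
  refine le_trans hfin ?_
  rw [← hVddef, ← hJdef]
  set N : ℝ := Real.sqrt (∫ γ : Ed d,
      (1 + ‖γ‖ ^ 2) ^ (s : ℝ) * (‖sigmaHat d σ γ‖) ^ 2) with hNdef
  have hN0 : 0 ≤ N := Real.sqrt_nonneg _
  have hexp : k ^ ((d:ℝ)/(s:ℝ) + m + 4*(n:ℝ) - (d:ℝ) - 1) =
      k ^ ((d:ℝ)/(s:ℝ)) * k ^ (m + 4*(n:ℝ) - (d:ℝ) - 1) := by
    rw [← Real.rpow_add hk0]; congr 1; ring
  have hKD0 : (0:ℝ) < k ^ ((d:ℝ)/(s:ℝ)) := Real.rpow_pos_of_pos hk0 _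
  have hkinv : k⁻¹ ≤ A⁻¹ * k ^ (m + 4*(n:ℝ) - (d:ℝ) - 1) * M / C₁ := by
    have h10 : k⁻¹ ≤ I₀ / (2*C₁) := by
      rw [le_div_iff₀ (by positivity)]
      rw [div_lt_div_iff₀ hk0 two_pos] at hCk
      have h11 : k⁻¹ * k = 1 := inv_mul_cancel₀ hk0.ne'
      nlinarith [mul_pos hk0 hI₀pos]
    refine le_trans h10 ?_
    rw [div_le_div_iff₀ (by positivity) hC₁]
    nlinarith [hI₀le, hC₁]
  clear_value A Vd Jc I₀ M N
  rw [hexp]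
  calc (Vd * (2 * (A⁻¹ * k ^ (m + 4*(n:ℝ) - (d:ℝ) - 1) * M)) + N * Real.sqrt Jc * k⁻¹) *
        k ^ ((d:ℝ)/(s:ℝ))
      ≤ (Vd * (2 * (A⁻¹ * k ^ (m + 4*(n:ℝ) - (d:ℝ) - 1) * M)) +
          N * Real.sqrt Jc * (A⁻¹ * k ^ (m + 4*(n:ℝ) - (d:ℝ) - 1) * M / C₁)) *
        k ^ ((d:ℝ)/(s:ℝ)) := by
        refine mul_le_mul_of_nonneg_right ?_ hKD0.le
        have h12 := mul_le_mul_of_nonneg_left hkinv (mul_nonneg hN0 hJc0)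
        nlinarith [h12]
    _ = (2 * Vd * A⁻¹) * (k ^ ((d:ℝ)/(s:ℝ)) * k ^ (m + 4*(n:ℝ) - (d:ℝ) - 1)) * M +
        (Real.sqrt Jc * A⁻¹ / C₁) * (k ^ ((d:ℝ)/(s:ℝ)) * k ^ (m + 4*(n:ℝ) - (d:ℝ) - 1)) *
          (N * M) := by ring
    _ ≤ (2 * Vd * A⁻¹) * (k ^ ((d:ℝ)/(s:ℝ)) * k ^ (m + 4*(n:ℝ) - (d:ℝ) - 1)) * ((1 + N) * M) +
        (Real.sqrt Jc * A⁻¹ / C₁) * (k ^ ((d:ℝ)/(s:ℝ)) * k ^ (m + 4*(n:ℝ) - (d:ℝ) - 1)) *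
          ((1 + N) * M) := by
        apply add_le_add
        · refine mul_le_mul_of_nonneg_left ?_ (by positivity)
          nlinarith [mul_nonneg hN0 hM0]
        · refine mul_le_mul_of_nonneg_left ?_ (by positivity)
          nlinarith [hM0, mul_nonneg hN0 hM0]
    _ = (2 * Vd * A⁻¹ + Real.sqrt Jc * A⁻¹ / C₁) *
        (k ^ ((d:ℝ)/(s:ℝ)) * k ^ (m + 4*(n:ℝ) - (d:ℝ) - 1)) * (1 + N) * M := by ring
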